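/- Let W be a Coxeter group with Coxeter system (W, S), S = {r_1, ..., r_n}, and for J ⊆ {1,...,n} let W^(J) = ⟨r_j : j ∈ J⟩. Then for all J, K, L ⊆ {1,...,n}, (W^(J) W^(K)) ∩ (W^(J) W^(L)) = W^(J) (W^(K) ∩ W^(L)) as subsets of W. -/

import Mathlib

set_option linter.unusedSectionVars false
set_option linter.unusedVariables false
set_option maxHeartbeats 1600000

open scoped Pointwise

namespace CoxAux

open List CoxeterSystem

variable {B W : Type*} [Group W] [DecidableEq W] {M : CoxeterMatrix B} (cs : CoxeterSystem M W)


/-- Parity of the number of occurrences of `t` in a list. -/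
def par : List W → W → ZMod 2
  | [], _ => 0
  | x :: l, t => (if t = x then 1 else 0) + par l t

theorem par_nil (t : W) : par ([] : List W) t = 0 := rfl

theorem par_cons (x : W) (l : List W) (t : W) :
    par (x :: l) t = (if t = x then 1 else 0) + par l t := rfl

theorem par_append (l₁ l₂ : List W) (t : W) :
    par (l₁ ++ l₂) t = par l₁ t + par l₂ t := by
  induction l₁ with
  | nil => simp [par]
  | cons x l ih => simp [par_cons, ih, add_assoc]

theorem par_eq_zero_of_not_mem {l : List W} {t : W} (h : t ∉ l) : par l t = 0 := by
  induction l with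
  | nil => rfl
  | cons x l ih =>
    rw [mem_cons, not_or] at h
    rw [par_cons, if_neg h.1, ih h.2, add_zero]

theorem mem_of_par_ne_zero {l : List W} {t : W} (h : par l t ≠ 0) : t ∈ l := by
  by_contra hc
  exact h (par_eq_zero_of_not_mem hc)

theorem par_map_conj (g : W) (l : List W) (t : W) :
    par (l.map fun x => g * x * g⁻¹) (g * t * g⁻¹) = par l t := by
  induction l with
  | nil => rfl
  | cons x l ih =>
    rw [map_cons, par_cons, par_cons, ih]
    congr 1
    have : (g * t * g⁻¹ = g * x * g⁻¹) ↔ (t = x) := by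
      constructor
      · intro h
        exact mul_left_cancel (mul_right_cancel h)
      · intro h; rw [h]
    simp only [this]

/-- The permutation of `W × ZMod 2` associated to the simple reflection `i`. -/
def eperm (i : B) : Equiv.Perm (W × ZMod 2) :=
  Function.Involutive.toPerm
    (fun p => (cs.simple i * p.1 * cs.simple i, p.2 + if p.1 = cs.simple i then 1 else 0))
    (by
      intro ⟨t, z⟩
      simp only [Prod.mk.injEq]
      constructor
      · rw [mul_assoc (cs.simple i) t, cs.simple_mul_simple_cancel_left,
          cs.simple_mul_simple_cancel_right]
      · have hiff : (cs.simple i * t * cs.simple i = cs.simple i) ↔ t = cs.simple i := by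
          constructor
          · intro h
            have h2 : cs.simple i * (t * cs.simple i) = cs.simple i * 1 := by
              rw [← mul_assoc, h, mul_one]
            have h3 : t = (cs.simple i)⁻¹ := eq_inv_of_mul_eq_one_left (mul_left_cancel h2)
            rwa [cs.inv_simple] at h3
          · intro h; rw [h, cs.simple_mul_simple_self, one_mul]
        by_cases h : t = cs.simple i
        · rw [if_pos h, if_pos (hiff.mpr h), add_assoc,
            (by decide : (1 + 1 : ZMod 2) = 0), add_zero]
        · rw [if_neg h, if_neg (fun hh => h (hiff.mp hh)), add_zero, add_zero])

theorem eperm_apply (i : B) (p : W × ZMod 2) :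
    eperm cs i p = (cs.simple i * p.1 * cs.simple i, p.2 + if p.1 = cs.simple i then 1 else 0) :=
  rfl

theorem ris_cons (i : B) (ω : List B) :
    cs.rightInvSeq (i :: ω) =
      ((cs.wordProd ω)⁻¹ * cs.simple i * cs.wordProd ω) :: cs.rightInvSeq ω := rfl

theorem prod_map_eperm (ω : List B) (p : W × ZMod 2) :
    ((ω.map (eperm cs)).prod) p =
      (cs.wordProd ω * p.1 * (cs.wordProd ω)⁻¹, p.2 + par (cs.rightInvSeq ω) p.1) := by
  induction ω generalizing p with
  | nil => simp [par]
  | cons i ω ih =>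
    rw [map_cons, prod_cons, Equiv.Perm.mul_apply, ih, eperm_apply, ris_cons, par_cons,
      cs.wordProd_cons]
    simp only [Prod.mk.injEq]
    constructor
    · rw [mul_inv_rev, cs.inv_simple]; group
    · have hiff : (cs.wordProd ω * p.1 * (cs.wordProd ω)⁻¹ = cs.simple i) ↔
          (p.1 = (cs.wordProd ω)⁻¹ * cs.simple i * cs.wordProd ω) := by
        constructor
        · intro h; rw [← h]; group
        · intro h; rw [h]; group
      simp only [hiff]
      abel

theorem braid_eq (i j : B) :
    cs.wordProd (alternatingWord i j (M i j)) = cs.wordProd (alternatingWord j i (M i j)) := by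
  have h := cs.wordProd_braidWord_eq i j
  simp only [CoxeterSystem.braidWord] at h
  rwa [M.symmetric j i] at h

theorem braidA (i j : B) (m' : ℕ) (hm : M i j = m' + 1) :
    cs.wordProd (alternatingWord i j (M i j)) * cs.simple j
      = cs.simple (if Even (M i j) then j else i) * cs.wordProd (alternatingWord i j (M i j)) := by
  have hL : cs.wordProd (alternatingWord i j (M i j)) * cs.simple j
      = cs.wordProd (alternatingWord j i m') := by
    rw [hm, alternatingWord_succ, cs.wordProd_concat, cs.simple_mul_simple_cancel_right]
  have hR : cs.simple (if Even (M i j) then j else i) * cs.wordProd (alternatingWord i j (M i j))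
      = cs.wordProd (alternatingWord j i m') := by
    rw [braid_eq cs i j, hm, alternatingWord_succ', cs.wordProd_cons, ← mul_assoc]
    have hite : (if Even (m' + 1) then j else i) = (if Even m' then i else j) := by
      by_cases h : Even m' <;> simp [h, Nat.even_add_one]
    rw [hite]
    by_cases h : Even m' <;> simp [h, cs.simple_mul_simple_self, one_mul]
  rw [hL, hR]

theorem braidB (i j : B) (m' : ℕ) (hm : M i j = m' + 1) :
    cs.wordProd (alternatingWord i j (M i j)) * cs.simple i
      = cs.simple (if Even (M i j) then i else j) * cs.wordProd (alternatingWord i j (M i j)) := by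
  have hL : cs.wordProd (alternatingWord i j (M i j)) * cs.simple i
      = cs.wordProd (alternatingWord i j m') := by
    rw [braid_eq cs i j, hm, alternatingWord_succ, cs.wordProd_concat,
      cs.simple_mul_simple_cancel_right]
  have hR : cs.simple (if Even (M i j) then i else j) * cs.wordProd (alternatingWord i j (M i j))
      = cs.wordProd (alternatingWord i j m') := by
    rw [hm, alternatingWord_succ', cs.wordProd_cons, ← mul_assoc]
    have hite : (if Even (m' + 1) then i else j) = (if Even m' then j else i) := by
      by_cases h : Even m' <;> simp [h, Nat.even_add_one]
    rw [hite]
    by_cases h : Even m' <;> simp [h, cs.simple_mul_simple_self, one_mul]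
  rw [hL, hR]

theorem vconst (i j : B) (m' : ℕ) (hm : M i j = m' + 1) (k : ℕ) :
    cs.wordProd (alternatingWord i j (k + M i j))
      = cs.wordProd (alternatingWord i j (M i j)) * cs.wordProd (alternatingWord i j k) := by
  induction k with
  | zero => simp [alternatingWord]
  | succ k ih =>
    have h1 : k + 1 + M i j = (k + M i j) + 1 := by omega
    rw [h1, alternatingWord_succ', cs.wordProd_cons, ih, alternatingWord_succ',
      cs.wordProd_cons, ← mul_assoc, ← mul_assoc]
    congr 1
    by_cases hk : Even k
    · have h2 : (if Even (k + M i j) then j else i) = (if Even (M i j) then j else i) := by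
        by_cases h : Even (M i j) <;> simp [Nat.even_add, hk, h]
      rw [h2, if_pos hk, braidA cs i j m' hm]
    · have h2 : (if Even (k + M i j) then j else i) = (if Even (M i j) then i else j) := by
        by_cases h : Even (M i j) <;> simp [Nat.even_add, hk, h]
      rw [h2, if_neg hk, braidB cs i j m' hm]

theorem ris_cons' (i : B) (ω : List B) :
    cs.rightInvSeq (i :: ω) =
      ((cs.wordProd ω)⁻¹ * cs.simple i * cs.wordProd ω) :: cs.rightInvSeq ω := rfl

theorem risdouble (i j : B) (m' : ℕ) (hm : M i j = m' + 1) (k : ℕ) :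
    cs.rightInvSeq (alternatingWord i j (k + M i j))
      = cs.rightInvSeq (alternatingWord i j k)
        ++ cs.rightInvSeq (alternatingWord i j (M i j)) := by
  induction k with
  | zero => simp [alternatingWord]
  | succ k ih =>
    have h1 : k + 1 + M i j = (k + M i j) + 1 := by omega
    rw [h1, alternatingWord_succ', alternatingWord_succ' i j k, ris_cons', ris_cons', ih,
      cons_append]
    congr 1
    have e1 : cs.simple (if Even (k + M i j) then j else i)
        * cs.wordProd (alternatingWord i j (k + M i j))
        = cs.wordProd (alternatingWord i j ((k + M i j) + 1)) := by
      rw [alternatingWord_succ', cs.wordProd_cons]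
    have e2 : cs.simple (if Even k then j else i) * cs.wordProd (alternatingWord i j k)
        = cs.wordProd (alternatingWord i j (k + 1)) := by
      rw [alternatingWord_succ', cs.wordProd_cons]
    have f1 : cs.simple (if Even (k + M i j) then j else i)
        = cs.wordProd (alternatingWord i j ((k + M i j) + 1))
          * (cs.wordProd (alternatingWord i j (k + M i j)))⁻¹ := by
      rw [← e1]; group
    have f2 : cs.simple (if Even k then j else i)
        = cs.wordProd (alternatingWord i j (k + 1))
          * (cs.wordProd (alternatingWord i j k))⁻¹ := by
      rw [← e2]; group
    rw [f1, f2]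
    have h3 := vconst cs i j m' hm k
    have h4 := vconst cs i j m' hm (k + 1)
    have h1' : k + 1 + M i j = (k + M i j) + 1 := h1
    rw [h1'] at h4
    rw [h3, h4]
    group

theorem prod_map_alternatingWord {G : Type*} [Monoid G] (f : B → G) (i j : B) (m : ℕ) :
    ((alternatingWord i j (2 * m)).map f).prod = (f i * f j) ^ m := by
  induction m with
  | zero => simp [alternatingWord]
  | succ m ih =>
    have h2 : 2 * (m + 1) = (2 * m + 1) + 1 := by ring
    rw [h2, alternatingWord_succ', alternatingWord_succ',
      if_neg (by simp [Nat.even_add_one, parity_simps]), if_pos (even_two_mul m),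
      map_cons, map_cons, prod_cons, prod_cons, ih, pow_succ', mul_assoc]

theorem eperm_liftable : M.IsLiftable (eperm cs) := by
  intro i j
  by_cases h0 : M i j = 0
  · rw [h0, pow_zero]
  · obtain ⟨m', hm⟩ : ∃ m', M i j = m' + 1 := ⟨M i j - 1, by omega⟩
    apply Equiv.ext
    intro p
    rw [← prod_map_alternatingWord (eperm cs) i j (M i j), prod_map_eperm]
    have hπ : cs.wordProd (alternatingWord i j (2 * M i j)) = 1 := by
      rw [cs.prod_alternatingWord_eq_mul_pow, if_pos (even_two_mul _), one_mul,
        Nat.mul_div_cancel_left _ (by norm_num : 0 < 2), cs.simple_mul_simple_pow]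
    have hpar : par (cs.rightInvSeq (alternatingWord i j (2 * M i j))) p.1 = 0 := by
      rw [two_mul, risdouble cs i j m' hm (M i j), par_append]
      exact (by decide : ∀ a : ZMod 2, a + a = 0) _
    rw [hπ, hpar]
    simp

/-- The parity representation as a homomorphism. -/
noncomputable def Phi : W →* Equiv.Perm (W × ZMod 2) :=
  cs.lift ⟨eperm cs, eperm_liftable cs⟩

theorem phi_wordProd (ω : List B) :
    Phi cs (cs.wordProd ω) = ((ω.map (eperm cs))).prod := by
  rw [CoxeterSystem.wordProd, MonoidHom.map_list_prod, map_map]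
  apply congrArg
  apply List.map_congr_left
  intro i _
  exact cs.lift_apply_simple (eperm_liftable cs) i

theorem par_welldef {ω ω' : List B} (h : cs.wordProd ω = cs.wordProd ω') (t : W) :
    par (cs.rightInvSeq ω) t = par (cs.rightInvSeq ω') t := by
  have h1 := prod_map_eperm cs ω (t, 0)
  have h2 := prod_map_eperm cs ω' (t, 0)
  rw [← phi_wordProd, h, phi_wordProd] at h1
  rw [h1] at h2
  have := congrArg Prod.snd h2
  simpa using this

theorem right_exchange_mem {ω : List B} (hred : cs.IsReduced ω) {i : B}
    (hd : cs.IsRightDescent (cs.wordProd ω) i) : cs.simple i ∈ cs.rightInvSeq ω := by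
  set w := cs.wordProd ω with hw
  have h1 : cs.length (w * cs.simple i) + 1 = cs.length w := cs.isRightDescent_iff.mp hd
  obtain ⟨ω', hred', hw'⟩ := cs.exists_reduced_word' (w * cs.simple i)
  have hcw : cs.wordProd (ω'.concat i) = w := by
    rw [cs.wordProd_concat, ← hw', cs.simple_mul_simple_cancel_right]
  -- s i ∉ ris ω'
  have hnot : cs.simple i ∉ cs.rightInvSeq ω' := by
    intro hmem
    have hinv := cs.isRightInversion_of_mem_rightInvSeq hred' hmem
    have : cs.length (cs.wordProd ω' * cs.simple i) < cs.length (cs.wordProd ω') := hinv.2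
    rw [← hw', cs.simple_mul_simple_cancel_right] at this
    omega
  have hpar' : par (cs.rightInvSeq ω') (cs.simple i) = 0 := par_eq_zero_of_not_mem hnot
  have hparc : par (cs.rightInvSeq (ω'.concat i)) (cs.simple i) = 1 := by
    rw [cs.rightInvSeq_concat, concat_eq_append, par_append, par_cons]
    have hmapconj : par (List.map (⇑(MulAut.conj (cs.simple i))) (cs.rightInvSeq ω'))
        (cs.simple i) = 0 := by
      have hfun : (⇑(MulAut.conj (cs.simple i)) : W → W)
          = fun x => cs.simple i * x * (cs.simple i)⁻¹ := by
        funext x; exact MulAut.conj_apply (cs.simple i) x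
      have hsi : cs.simple i = cs.simple i * cs.simple i * (cs.simple i)⁻¹ := by group
      rw [hfun]
      calc par (List.map (fun x => cs.simple i * x * (cs.simple i)⁻¹) (cs.rightInvSeq ω'))
            (cs.simple i)
          = par (List.map (fun x => cs.simple i * x * (cs.simple i)⁻¹) (cs.rightInvSeq ω'))
            (cs.simple i * cs.simple i * (cs.simple i)⁻¹) := by rw [← hsi]
        _ = par (cs.rightInvSeq ω') (cs.simple i) := par_map_conj _ _ _
        _ = 0 := hpar'
    rw [hmapconj, if_pos rfl, par_nil]
    norm_num
  have hfin : par (cs.rightInvSeq ω) (cs.simple i) = 1 := by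
    rw [par_welldef cs (hcw.symm ▸ hw : cs.wordProd ω = cs.wordProd (ω'.concat i)), hparc]
  apply mem_of_par_ne_zero
  rw [hfin]
  exact one_ne_zero

theorem left_exchange' {ω : List B} (hred : cs.IsReduced ω) {i : B}
    (hd : cs.IsLeftDescent (cs.wordProd ω) i) :
    ∃ k < ω.length, cs.simple i * cs.wordProd ω = cs.wordProd (ω.eraseIdx k) := by
  have hrev : cs.IsReduced ω.reverse := (cs.isReduced_reverse_iff ω).mpr hred
  have hd' : cs.IsRightDescent (cs.wordProd ω.reverse) i := by
    rw [cs.wordProd_reverse]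
    exact cs.isRightDescent_inv_iff.mpr hd
  have hmem := right_exchange_mem cs hrev hd'
  rw [cs.rightInvSeq_reverse, mem_reverse] at hmem
  obtain ⟨k, hk, hke⟩ := List.mem_iff_getElem.mp hmem
  rw [cs.length_leftInvSeq] at hk
  refine ⟨k, hk, ?_⟩
  have hgd : (cs.leftInvSeq ω).getD k 1 = cs.simple i := by
    rw [List.getD_eq_getElem _ 1 (by rw [cs.length_leftInvSeq]; exact hk), hke]
  rw [← hgd]
  exact cs.getD_leftInvSeq_mul_wordProd ω k

theorem left_exchange_sublist {ω : List B} (hred : cs.IsReduced ω) {i : B}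
    (hd : cs.IsLeftDescent (cs.wordProd ω) i) :
    ∃ σ, σ.Sublist ω ∧ σ.length + 1 = ω.length
      ∧ cs.simple i * cs.wordProd ω = cs.wordProd σ := by
  obtain ⟨k, hk, hke⟩ := left_exchange' cs hred hd
  exact ⟨ω.eraseIdx k, ω.eraseIdx_sublist k, List.length_eraseIdx_add_one hk, hke⟩

theorem right_exchange' {ω : List B} (hred : cs.IsReduced ω) {i : B}
    (hd : cs.IsRightDescent (cs.wordProd ω) i) :
    ∃ k < ω.length, cs.wordProd ω * cs.simple i = cs.wordProd (ω.eraseIdx k) := by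
  have hmem := right_exchange_mem cs hred hd
  obtain ⟨k, hk, hke⟩ := List.mem_iff_getElem.mp hmem
  rw [cs.length_rightInvSeq] at hk
  refine ⟨k, hk, ?_⟩
  have hgd : (cs.rightInvSeq ω).getD k 1 = cs.simple i := by
    rw [List.getD_eq_getElem _ 1 (by rw [cs.length_rightInvSeq]; exact hk), hke]
  rw [← hgd]
  exact cs.wordProd_mul_getD_rightInvSeq ω k

theorem word_mem {K : Set B} {ω : List B} (h : ∀ l ∈ ω, l ∈ K) :
    cs.wordProd ω ∈ Subgroup.closure (cs.simple '' K) := by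
  induction ω with
  | nil => rw [cs.wordProd_nil]; exact one_mem _
  | cons i ω ih =>
    rw [cs.wordProd_cons]
    exact mul_mem (Subgroup.subset_closure ⟨i, h i (mem_cons_self (a := i) (l := ω)), rfl⟩)
      (ih fun l hl => h l (mem_cons_of_mem i hl))

theorem mem_word {K : Set B} {w : W} (h : w ∈ Subgroup.closure (cs.simple '' K)) :
    ∃ ω : List B, (∀ l ∈ ω, l ∈ K) ∧ w = cs.wordProd ω := by
  induction h using Subgroup.closure_induction with
  | mem x hx =>
    obtain ⟨i, hi, rfl⟩ := hx
    exact ⟨[i], by simpa using hi, by simp⟩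
  | one => exact ⟨[], by simp, by simp⟩
  | mul x y _ _ ihx ihy =>
    obtain ⟨ω₁, h₁, rfl⟩ := ihx
    obtain ⟨ω₂, h₂, rfl⟩ := ihy
    exact ⟨ω₁ ++ ω₂, fun l hl => (mem_append.mp hl).elim (h₁ l) (h₂ l),
      (cs.wordProd_append ω₁ ω₂).symm⟩
  | inv x _ ihx =>
    obtain ⟨ω, h₁, rfl⟩ := ihx
    exact ⟨ω.reverse, fun l hl => h₁ l (mem_reverse.mp hl), (cs.wordProd_reverse ω).symm⟩

theorem delete_aux {K : Set B} : ∀ (N : ℕ) (ω : List B), ω.length ≤ N → (∀ l ∈ ω, l ∈ K) →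
    ∃ κ : List B, (∀ l ∈ κ, l ∈ K) ∧ cs.IsReduced κ ∧ cs.wordProd κ = cs.wordProd ω := by
  intro N
  induction N with
  | zero =>
    intro ω hlen _
    have : ω = [] := List.eq_nil_of_length_eq_zero (Nat.le_zero.mp hlen)
    subst this
    exact ⟨[], by simp, by simp [CoxeterSystem.IsReduced], rfl⟩
  | succ N ih =>
    intro ω hlen hK
    by_cases hred : cs.IsReduced ω
    · exact ⟨ω, hK, hred, rfl⟩
    · -- find minimal non-reduced prefix
      have hQ : ∃ n, ¬ cs.IsReduced (ω.take n) := ⟨ω.length, by rwa [take_length]⟩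
      classical
      have hn₀spec : ¬ cs.IsReduced (ω.take (Nat.find hQ)) := Nat.find_spec hQ
      have hn₀pos : Nat.find hQ ≠ 0 := by
        intro h0
        apply hn₀spec
        rw [h0, take_zero]
        simp [CoxeterSystem.IsReduced]
      obtain ⟨j, hj⟩ : ∃ j, Nat.find hQ = j + 1 := ⟨Nat.find hQ - 1, by omega⟩
      rw [hj] at hn₀spec
      have hjred : cs.IsReduced (ω.take j) := by
        by_contra hc
        exact Nat.find_min hQ (by omega) hc
      have hjlt : j < ω.length := by
        by_contra hc
        push_neg at hc
        rw [take_of_length_le hc] at hjred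
        exact hred hjred
      have htake : ω.take (j + 1) = ω.take j ++ [ω[j]] := by
        rw [List.take_succ, getElem?_eq_getElem hjlt]
        rfl
      have hlen_take : (ω.take j).length = j := by
        rw [length_take]
        omega
      have hlv : cs.length (cs.wordProd (ω.take j)) = j := by
        rw [hjred]; exact hlen_take
      have hπtake : cs.wordProd (ω.take (j + 1)) = cs.wordProd (ω.take j) * cs.simple ω[j] := by
        rw [htake, cs.wordProd_append, cs.wordProd_singleton]
      have hdesc : cs.IsRightDescent (cs.wordProd (ω.take j)) ω[j] := by
        rcases cs.length_mul_simple (cs.wordProd (ω.take j)) ω[j] with h | h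
        · exfalso
          apply hn₀spec
          unfold CoxeterSystem.IsReduced
          rw [hπtake, h, hlv, htake, length_append, hlen_take]
          simp
        · unfold IsRightDescent
          omega
      obtain ⟨k, hk, hke⟩ := right_exchange' cs hjred hdesc
      set κ₀ := (ω.take j).eraseIdx k ++ ω.drop (j + 1) with hκ₀
      have hπκ₀ : cs.wordProd κ₀ = cs.wordProd ω := by
        conv_rhs => rw [← List.take_append_drop (j + 1) ω]
        rw [hκ₀, cs.wordProd_append, cs.wordProd_append, ← hke, hπtake]
      have hκ₀K : ∀ l ∈ κ₀, l ∈ K := by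
        intro l hl
        rcases mem_append.mp hl with h | h
        · exact hK l (List.take_subset j ω (((ω.take j).eraseIdx_sublist k).subset h))
        · exact hK l (List.drop_subset (j + 1) ω h)
      have hκ₀len : κ₀.length ≤ N := by
        rw [hκ₀, length_append]
        have h1 : ((ω.take j).eraseIdx k).length + 1 = j := by
          rw [List.length_eraseIdx_add_one hk]
          exact hlen_take
        have h2 : (ω.drop (j + 1)).length = ω.length - (j + 1) := by rw [length_drop]
        omega
      obtain ⟨κ, hκK, hκred, hκπ⟩ := ih κ₀ hκ₀len hκ₀K
      exact ⟨κ, hκK, hκred, by rw [hκπ, hπκ₀]⟩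

theorem reduced_word_over {K : Set B} {w : W} (h : w ∈ Subgroup.closure (cs.simple '' K)) :
    ∃ ω : List B, (∀ l ∈ ω, l ∈ K) ∧ cs.IsReduced ω ∧ w = cs.wordProd ω := by
  obtain ⟨ω, hK, rfl⟩ := mem_word cs h
  obtain ⟨κ, h1, h2, h3⟩ := delete_aux cs ω.length ω le_rfl hK
  exact ⟨κ, h1, h2, h3.symm⟩

theorem mul_min_length {J : Set B} {u : W}
    (hmin : ∀ z : W, z * u⁻¹ ∈ Subgroup.closure (cs.simple '' J) →
      cs.length u ≤ cs.length z) :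
    ∀ w ∈ Subgroup.closure (cs.simple '' J), cs.length (w * u) = cs.length w + cs.length u := by
  suffices h : ∀ n : ℕ, ∀ w ∈ Subgroup.closure (cs.simple '' J), cs.length w = n →
      cs.length (w * u) = cs.length w + cs.length u by
    exact fun w hw => h (cs.length w) w hw rfl
  intro n
  induction n using Nat.strong_induction_on with
  | _ n ih =>
    intro w hw hn
    rcases Nat.eq_zero_or_pos n with h0 | hpos
    · have : w = 1 := cs.length_eq_zero_iff.mp (by omega)
      subst this
      simp
    · obtain ⟨α, hαJ, hαred, hαπ⟩ := reduced_word_over cs hw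
      have hαlen : α.length = n := by rw [← hn, hαπ, hαred]
      have hαne : α ≠ [] := by
        intro hnil
        rw [hnil] at hαlen
        simp at hαlen
        omega
      obtain ⟨j, α', rfl⟩ := List.exists_cons_of_ne_nil hαne
      have hα'red : cs.IsReduced α' := by
        have := hαred.drop 1
        simpa using this
      set w' := cs.wordProd α' with hw'
      have hw'J : w' ∈ Subgroup.closure (cs.simple '' J) :=
        word_mem cs fun l hl => hαJ l (mem_cons_of_mem j hl)
      have hjJ : j ∈ J := hαJ j (mem_cons_self (a := j) (l := α'))
      have hwsplit : w = cs.simple j * w' := by rw [hαπ, cs.wordProd_cons]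
      have hα'len : α'.length = n - 1 := by
        have : (j :: α').length = n := hαlen
        simp at this
        omega
      have hlw' : cs.length w' = n - 1 := by rw [hw', hα'red]; exact hα'len
      have ihw' : cs.length (w' * u) = cs.length w' + cs.length u :=
        ih (n - 1) (by omega) w' hw'J hlw'
      obtain ⟨γ, hγred, hγπ⟩ := cs.exists_reduced_word' u
      have hγlen : cs.length u = γ.length := by rw [hγπ]; exact hγred
      have hδred : cs.IsReduced (α' ++ γ) := by
        unfold CoxeterSystem.IsReduced
        rw [cs.wordProd_append, ← hw', ← hγπ, ihw', length_append]
        omega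
      have hδπ : cs.wordProd (α' ++ γ) = w' * u := by
        rw [cs.wordProd_append, ← hw', ← hγπ]
      have hnd : ¬ cs.IsLeftDescent (w' * u) j := by
        intro hd
        rw [← hδπ] at hd
        obtain ⟨σ, hσsub, hσlen, hσπ⟩ := left_exchange_sublist cs hδred hd
        obtain ⟨σ₁, σ₂, rfl, hσ₁, hσ₂⟩ := List.sublist_append_iff.mp hσsub
        have hl1 : σ₁.length ≤ α'.length := hσ₁.length_le
        have hl2 : σ₂.length ≤ γ.length := hσ₂.length_le
        rw [length_append] at hσlen
        rw [length_append] at hσlen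
        rcases eq_or_lt_of_le hl1 with heq1 | hlt1
        · -- σ₁ = α'
          have hσ₁eq : σ₁ = α' := hσ₁.eq_of_length heq1
          subst hσ₁eq
          have hz : cs.wordProd σ₂ = w'⁻¹ * (cs.simple j * (w' * u)) := by
            rw [← hδπ, hσπ, cs.wordProd_append, ← hw']
            group
          have hzJ : cs.wordProd σ₂ * u⁻¹ ∈ Subgroup.closure (cs.simple '' J) := by
            have : cs.wordProd σ₂ * u⁻¹ = w'⁻¹ * cs.simple j * w' := by
              rw [hz]; group
            rw [this]
            exact mul_mem (mul_mem (inv_mem hw'J)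
              (Subgroup.subset_closure ⟨j, hjJ, rfl⟩)) hw'J
          have h1 := hmin _ hzJ
          have h2 : cs.length (cs.wordProd σ₂) ≤ σ₂.length := cs.length_wordProd_le σ₂
          omega
        · -- σ₂ = γ
          have hσ₂eq : σ₂ = γ := hσ₂.eq_of_length (by omega)
          subst hσ₂eq
          have hz : cs.simple j * w' = cs.wordProd σ₁ := by
            have h4 : cs.simple j * (w' * u) = cs.wordProd σ₁ * u := by
              rw [← hδπ, hσπ, cs.wordProd_append, ← hγπ]
            rw [← mul_assoc] at h4
            exact mul_right_cancel h4
          have h5 : cs.length w ≤ σ₁.length := by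
            rw [hwsplit, hz]; exact cs.length_wordProd_le σ₁
          have h6 : σ₁.length + 1 = α'.length := by omega
          have h7 : cs.length w = α'.length + 1 := by
            rw [hαπ, hαred]
            simp
          omega
      have hstep : cs.length (cs.simple j * (w' * u)) = cs.length (w' * u) + 1 :=
        cs.not_isLeftDescent_iff.mp hnd
      have hrw : w * u = cs.simple j * (w' * u) := by rw [hwsplit]; group
      rw [hrw, hstep, ihw', hlw', hn]
      omega

theorem min_rep_mem {J K : Set B} {u : W}
    (hmin : ∀ z : W, z * u⁻¹ ∈ Subgroup.closure (cs.simple '' J) →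
      cs.length u ≤ cs.length z) :
    ∀ y : W, y * u⁻¹ ∈ Subgroup.closure (cs.simple '' J) →
      y ∈ Subgroup.closure (cs.simple '' K) → u ∈ Subgroup.closure (cs.simple '' K) := by
  suffices h : ∀ n : ℕ, ∀ y : W, cs.length y = n →
      y * u⁻¹ ∈ Subgroup.closure (cs.simple '' J) →
      y ∈ Subgroup.closure (cs.simple '' K) → u ∈ Subgroup.closure (cs.simple '' K) by
    exact fun y hy hyK => h (cs.length y) y rfl hy hyK
  intro n
  induction n using Nat.strong_induction_on with
  | _ n ih =>
    intro y hn hyJ hyK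
    set w := y * u⁻¹ with hwdef
    have hyw : y = w * u := by rw [hwdef]; group
    have hly : cs.length y = cs.length w + cs.length u := by
      rw [hyw] at hn ⊢
      exact mul_min_length cs hmin w hyJ
    by_cases hw1 : w = 1
    · rw [hw1, one_mul] at hyw
      rwa [hyw] at hyK
    · obtain ⟨α, hαJ, hαred, hαπ⟩ := reduced_word_over cs hyJ
      have hαne : α ≠ [] := by
        intro hnil
        apply hw1
        rw [hαπ, hnil, cs.wordProd_nil]
      obtain ⟨j, α', rfl⟩ := List.exists_cons_of_ne_nil hαne
      have hα'red : cs.IsReduced α' := by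
        have := hαred.drop 1
        simpa using this
      set w' := cs.wordProd α' with hw'
      have hw'J : w' ∈ Subgroup.closure (cs.simple '' J) :=
        word_mem cs fun l hl => hαJ l (mem_cons_of_mem j hl)
      have hjJ : j ∈ J := hαJ j (mem_cons_self (a := j) (l := α'))
      have hwsplit : w = cs.simple j * w' := by rw [hαπ, cs.wordProd_cons]
      have hsjy : cs.simple j * y = w' * u := by
        rw [hyw, hwsplit, ← mul_assoc, cs.simple_mul_simple_cancel_left]
      have hlw : cs.length w = α'.length + 1 := by
        rw [hαπ, hαred]
        simp
      have hlw' : cs.length w' = α'.length := by rw [hw', hα'red]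
      have hlsjy : cs.length (cs.simple j * y) = cs.length w' + cs.length u := by
        rw [hsjy]
        exact mul_min_length cs hmin w' hw'J
      have hdesc : cs.IsLeftDescent y j := by
        unfold CoxeterSystem.IsLeftDescent
        omega
      -- s j * y ∈ closure K
      obtain ⟨κ, hκK, hκred, hκπ⟩ := reduced_word_over cs hyK
      rw [hκπ] at hdesc
      obtain ⟨k, hk, hke⟩ := left_exchange' cs hκred hdesc
      have hsjyK : cs.simple j * y ∈ Subgroup.closure (cs.simple '' K) := by
        rw [hκπ, hke]
        exact word_mem cs fun l hl => hκK l ((κ.eraseIdx_sublist k).subset hl)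
      have hsjyJ : (cs.simple j * y) * u⁻¹ ∈ Subgroup.closure (cs.simple '' J) := by
        have : (cs.simple j * y) * u⁻¹ = w' := by rw [hsjy]; group
        rw [this]
        exact hw'J
      exact ih (cs.length (cs.simple j * y)) (by omega) _ rfl hsjyJ hsjyK

theorem main_aux {J K L : Set B} {x : W}
    (hK : x ∈ (Subgroup.closure (cs.simple '' J) : Set W)
      * (Subgroup.closure (cs.simple '' K) : Set W))
    (hL : x ∈ (Subgroup.closure (cs.simple '' J) : Set W)
      * (Subgroup.closure (cs.simple '' L) : Set W)) :
    ∃ a ∈ Subgroup.closure (cs.simple '' J),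
      ∃ v, v ∈ Subgroup.closure (cs.simple '' K) ∧ v ∈ Subgroup.closure (cs.simple '' L)
        ∧ a * v = x := by
  obtain ⟨a, ha, b, hb, hab⟩ := Set.mem_mul.mp hK
  obtain ⟨a', ha', c, hc, hac⟩ := Set.mem_mul.mp hL
  rw [SetLike.mem_coe] at ha hb ha' hc
  have hcb : c * b⁻¹ ∈ Subgroup.closure (cs.simple '' J) := by
    have : c * b⁻¹ = a'⁻¹ * a := by
      have : a' * c = a * b := by rw [hab, hac]
      calc c * b⁻¹ = a'⁻¹ * (a' * c) * b⁻¹ := by group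
        _ = a'⁻¹ * (a * b) * b⁻¹ := by rw [this]
        _ = a'⁻¹ * a := by group
    rw [this]
    exact mul_mem (inv_mem ha') ha
  classical
  have hex : ∃ n : ℕ, ∃ z : W, z * b⁻¹ ∈ Subgroup.closure (cs.simple '' J)
      ∧ cs.length z = n :=
    ⟨cs.length b, b, by simpa using one_mem (Subgroup.closure (cs.simple '' J)), rfl⟩
  obtain ⟨u, huJ, hulen⟩ := Nat.find_spec hex
  have hmin : ∀ z : W, z * u⁻¹ ∈ Subgroup.closure (cs.simple '' J) →
      cs.length u ≤ cs.length z := by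
    intro z hz
    have hzb : z * b⁻¹ ∈ Subgroup.closure (cs.simple '' J) := by
      have : z * b⁻¹ = (z * u⁻¹) * (u * b⁻¹) := by group
      rw [this]
      exact mul_mem hz huJ
    rw [hulen]
    exact Nat.find_min' hex ⟨z, hzb, rfl⟩
  have hbu : b * u⁻¹ ∈ Subgroup.closure (cs.simple '' J) := by
    have : b * u⁻¹ = (u * b⁻¹)⁻¹ := by group
    rw [this]
    exact inv_mem huJ
  have hcu : c * u⁻¹ ∈ Subgroup.closure (cs.simple '' J) := by
    have : c * u⁻¹ = (c * b⁻¹) * (b * u⁻¹) := by group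
    rw [this]
    exact mul_mem hcb hbu
  have huK : u ∈ Subgroup.closure (cs.simple '' K) := min_rep_mem cs hmin b hbu hb
  have huL : u ∈ Subgroup.closure (cs.simple '' L) := min_rep_mem cs (K := L) hmin c hcu hc
  refine ⟨x * u⁻¹, ?_, u, huK, huL, by group⟩
  have : x * u⁻¹ = a * (b * u⁻¹) := by rw [← hab]; group
  rw [this]
  exact mul_mem ha hbu

end CoxAux

/-- For a Coxeter system `(W, S)` with `S = {r_1, ..., r_n}` and standard parabolic
subgroups `W^(J) = ⟨r_j : j ∈ J⟩`, one has
`(W^(J) W^(K)) ∩ (W^(J) W^(L)) = W^(J) (W^(K) ∩ W^(L))` for all `J, K, L`. -/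
theorem stmt_5 {n : ℕ} {W : Type*} [Group W]
    (M : CoxeterMatrix (Fin n)) (cs : CoxeterSystem M W)
    (P : Set (Fin n) → Subgroup W)
    (hP : ∀ J, P J = Subgroup.closure (cs.simple '' J)) :
    ∀ J K L : Set (Fin n),
      (((P J : Set W) * (P K : Set W)) ∩ ((P J : Set W) * (P L : Set W)))
        = (P J : Set W) * ((P K ⊓ P L : Subgroup W) : Set W) := by
  classical
  intro J K L
  ext x
  simp only [Set.mem_inter_iff, hP]
  constructor
  · rintro ⟨hK, hL⟩
    obtain ⟨a, ha, v, hvK, hvL, hav⟩ := CoxAux.main_aux cs hK hL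
    rw [Set.mem_mul]
    refine ⟨a, SetLike.mem_coe.mpr ha, v, ?_, hav⟩
    rw [SetLike.mem_coe, Subgroup.mem_inf]
    exact ⟨hvK, hvL⟩
  · intro hx
    obtain ⟨a, ha, v, hv, hav⟩ := Set.mem_mul.mp hx
    rw [SetLike.mem_coe, Subgroup.mem_inf] at hv
    constructor
    · exact Set.mem_mul.mpr ⟨a, ha, v, SetLike.mem_coe.mpr hv.1, hav⟩
    · exact Set.mem_mul.mpr ⟨a, ha, v, SetLike.mem_coe.mpr hv.2, hav⟩
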